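/- Let $\{(\mu^e, S^e)\}_{e \in \mathcal{E}}$ be a finite family with $\mu^e \in \mathbb{R}^{p+1}$, $S^e$ symmetric PSD of size $(p+1)$, and weights $\omega^e > 0$ summing to $1$, with $\mu^0 = 0$. For $\gamma \ge 1$ define the anchor set $\mathcal{C}_{\mathrm{anchor}}^\gamma := \{M \succeq 0 : M \preceq \sum_e \omega^e (S^e + \gamma \mu^e{\mu^e}^\top)\}$ and the DRIG set $\mathcal{C}_{\mathrm{DRIG}}^\gamma := \{M \succeq 0 : M \preceq S^0 + \gamma\sum_e \omega^e(S^e - S^0 + \mu^e{\mu^e}^\top)\}$. Then $\mathcal{C}_{\mathrm{anchor}}^\gamma \subseteq \mathcal{C}_{\mathrm{DRIG}}^\gamma$. -/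

import Mathlib

open Matrix Finset

/-- The anchor regression perturbation class is contained in the DRIG perturbation class
for `γ ≥ 1`. -/
theorem anchor_class_subset_drig_class {p : ℕ} {ι : Type*} [Fintype ι] (e₀ : ι)
    (μ : ι → Fin (p + 1) → ℝ) (S : ι → Matrix (Fin (p + 1)) (Fin (p + 1)) ℝ)
    (ω : ι → ℝ) (hωpos : ∀ e, 0 < ω e) (hωsum : ∑ e, ω e = 1)
    (hS : ∀ e, (S e).PosSemidef) (hμ0 : μ e₀ = 0)
    (hdom : ((∑ e, ω e • S e) - S e₀).PosSemidef)
    (γ : ℝ) (hγ : 1 ≤ γ) :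
    ∀ M : Matrix (Fin (p + 1)) (Fin (p + 1)) ℝ, M.PosSemidef →
      ((∑ e, ω e • (S e + γ • vecMulVec (μ e) (μ e))) - M).PosSemidef →
      ((S e₀ + γ • ∑ e, ω e • (S e - S e₀ + vecMulVec (μ e) (μ e))) - M).PosSemidef := by
  intro M hM hanchor
  have hsmul : ((γ - 1) • ((∑ e, ω e • S e) - S e₀)).PosSemidef := by
    refine ⟨by rw [Matrix.IsHermitian, Matrix.conjTranspose_smul, star_trivial, hdom.1.eq], fun x => ?_⟩
    have := hdom.2 x
    have hγ' : (0:ℝ) ≤ γ - 1 := by linarith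
    convert mul_nonneg hγ' this using 1
    simp only [Finsupp.mul_sum, Matrix.smul_apply, smul_eq_mul, star_trivial]
    exact Finsupp.sum_congr fun i _ => Finsupp.sum_congr fun j _ => by ring
  have key : (S e₀ + γ • ∑ e, ω e • (S e - S e₀ + vecMulVec (μ e) (μ e))) - M
      = ((∑ e, ω e • (S e + γ • vecMulVec (μ e) (μ e))) - M)
        + (γ - 1) • ((∑ e, ω e • S e) - S e₀) := by
    have h1 : ∑ e, ω e • (S e - S e₀ + vecMulVec (μ e) (μ e))
        = (∑ e, ω e • S e) - S e₀ + ∑ e, ω e • vecMulVec (μ e) (μ e) := by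
      simp [Finset.sum_add_distrib, Finset.sum_sub_distrib, smul_sub, smul_add,
        ← Finset.sum_smul, hωsum]
    have h2 : ∑ e, ω e • (S e + γ • vecMulVec (μ e) (μ e))
        = (∑ e, ω e • S e) + γ • ∑ e, ω e • vecMulVec (μ e) (μ e) := by
      simp [Finset.sum_add_distrib, smul_add, Finset.smul_sum, smul_comm γ]
    rw [h1, h2]
    module
  rw [key]
  exact hanchor.add hsmul
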